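/- arXiv:2205.06383 — 2 statements merged into one kernel-verified Lean document; each statement's English description precedes it below -/
import Mathlib

section
/- Let B be a group, δ, ρ ∈ B, and z ∈ Z(B) a central element. Suppose δ^r = z and ρ^d = z, ρ and δ commute, and B is torsion-free. Set k = gcd(d,r), d = d'k, r = r'k. Then for any integers u, v with d'u + r'v = 1, the element q = ρ^v δ^u does not depend on the choice of (u,v). -/
/-- Independence of `ρ^v * δ^u` of the choice of Bézout pair `(u,v)`. -/
theorem stmt_1 {B : Type*} [Group B] (z δ ρ : B)
    (htf : ∀ g : B, ∀ m : ℕ, 0 < m → g ^ m = 1 → g = 1)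
    (hz : ∀ b : B, z * b = b * z)
    (hcomm : δ * ρ = ρ * δ)
    (r d : ℕ) (hr : 0 < r) (hd : 0 < d)
    (hδ : δ ^ r = z) (hρ : ρ ^ d = z)
    (u v u' v' : ℤ)
    (huv : (d / Nat.gcd d r : ℕ) * u + (r / Nat.gcd d r : ℕ) * v = 1)
    (huv' : (d / Nat.gcd d r : ℕ) * u' + (r / Nat.gcd d r : ℕ) * v' = 1) :
    ρ ^ v * δ ^ u = ρ ^ v' * δ ^ u' := by
  set k := Nat.gcd d r with hk
  have hk0 : 0 < k := Nat.gcd_pos_of_pos_left _ hd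
  have hC : Commute δ ρ := hcomm
  set D : ℤ := ((d / k : ℕ) : ℤ) with hD
  set R : ℤ := ((r / k : ℕ) : ℤ) with hR
  have hRk : R * (k : ℤ) = (r : ℤ) := by
    rw [hR]; exact_mod_cast Nat.div_mul_cancel (Nat.gcd_dvd_right d r)
  have hDk : D * (k : ℤ) = (d : ℤ) := by
    rw [hD]; exact_mod_cast Nat.div_mul_cancel (Nat.gcd_dvd_left d r)
  -- key element
  have hw : δ ^ R * ρ ^ (-D) = 1 := by
    apply htf _ k hk0
    rw [(hC.zpow_zpow R (-D)).mul_pow k, ← zpow_natCast (δ ^ R) k,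
      ← zpow_natCast (ρ ^ (-D)) k, ← zpow_mul, ← zpow_mul, hRk, neg_mul, hDk,
      zpow_neg, zpow_natCast, zpow_natCast, hδ, hρ, mul_inv_cancel]
  have hkey : δ ^ R = ρ ^ D := by
    rw [zpow_neg] at hw
    exact mul_inv_eq_one.mp hw
  -- arithmetic
  have hcop : IsCoprime D R := by
    rw [Int.isCoprime_iff_gcd_eq_one, hD, hR, Int.gcd_natCast_natCast]
    exact Nat.coprime_div_gcd_div_gcd hk0
  have heq : D * (u - u') = R * (v' - v) := by linarith [huv, huv']
  have hdvd : R ∣ (u - u') := hcop.symm.dvd_of_dvd_mul_left ⟨v' - v, heq⟩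
  obtain ⟨t, ht⟩ := hdvd
  have hR0 : R ≠ 0 := by
    rw [hR]
    exact_mod_cast Nat.ne_of_gt (Nat.div_pos (Nat.le_of_dvd hr (Nat.gcd_dvd_right d r)) hk0)
  have hvt : v' - v = D * t := by
    have : R * (D * t) = R * (v' - v) := by rw [← heq, ht]; ring
    exact (mul_left_cancel₀ hR0 this).symm
  -- finish
  have hcz : Commute (δ ^ R) ρ := by rw [hkey]; exact (Commute.refl ρ).zpow_left D
  have hδu : δ ^ u = δ ^ u' * ρ ^ (D * t) := by
    have : u = u' + R * t := by linarith [ht]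
    rw [this, zpow_add, zpow_mul, hkey, ← zpow_mul]
  have hv2 : v + D * t = v' := by linarith
  rw [hδu, ← mul_assoc, (hC.symm.zpow_zpow v u').eq, mul_assoc, ← zpow_add, hv2]
  exact (hC.zpow_zpow u' v').eq
end

section
/- In the group B₁₂ = ⟨s,t,u | stus = tust = ustu⟩ with Δ = stus, the element Δ³ is central, and Δ³ = (stu)⁴. -/
/-- Relations of the braid group of `G₁₂`: `⟨s,t,u | stus = tust = ustu⟩`. -/
def B12Rels : Set (FreeGroup (Fin 3)) :=
  let s := FreeGroup.of (0 : Fin 3)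
  let t := FreeGroup.of (1 : Fin 3)
  let u := FreeGroup.of (2 : Fin 3)
  {s * t * u * s * (t * u * s * t)⁻¹, t * u * s * t * (u * s * t * u)⁻¹}

private lemma b12_aux {G : Type*} [Group G] (s t u : G)
    (h1 : s * t * u * s = t * u * s * t) (h2 : t * u * s * t = u * s * t * u) :
    (s * t * u) ^ 4 = (s * t * u * s) ^ 3 ∧
    (s * t * u * s) ^ 3 * s = s * (s * t * u * s) ^ 3 ∧
    (s * t * u * s) ^ 3 * t = t * (s * t * u * s) ^ 3 ∧
    (s * t * u * s) ^ 3 * u = u * (s * t * u * s) ^ 3 := by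
  have hs : s * (s * t * u * s) = (s * t * u * s) * t := by
    conv_lhs => rw [h1]
    group
  have ht : t * (s * t * u * s) = (s * t * u * s) * u :=
    calc t * (s * t * u * s) = t * (u * s * t * u) := by rw [h1, h2]
      _ = (t * u * s * t) * u := by group
      _ = (s * t * u * s) * u := by rw [h1]
  have hu : u * (s * t * u * s) = (s * t * u * s) * s :=
    calc u * (s * t * u * s) = (u * s * t * u) * s := by group
      _ = (t * u * s * t) * s := by rw [h2]
      _ = (s * t * u * s) * s := by rw [h1]
  set d := s * t * u * s with hd
  have key : ∀ a b c : G, a * d = d * b → b * d = d * c →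
      c * d = d * a → d ^ 3 * a = a * d ^ 3 := by
    intro a b c ha hb hc
    calc d ^ 3 * a = d * d * (d * a) := by simp only [pow_succ, pow_zero, one_mul, mul_assoc]
      _ = d * d * (c * d) := by rw [← hc]
      _ = d * (d * c) * d := by group
      _ = d * (b * d) * d := by rw [← hb]
      _ = (a * d) * d * d := by rw [ha]; group
      _ = a * d ^ 3 := by simp only [pow_succ, pow_zero, one_mul, mul_assoc]
  refine ⟨?_, key s t u hs ht hu, key t u s ht hu hs, key u s t hu hs ht⟩
  have e1 : (s * t * u) ^ 4 = d * (t * u * s * t) * (u * s * t * u) := by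
    rw [hd]
    simp only [pow_succ, pow_zero, one_mul, mul_assoc]
  rw [e1, ← h2, ← h1, pow_succ, pow_succ, pow_one]

/-- In `B₁₂` with `Δ = stus`, one has `(stu)⁴ = Δ³` and `Δ³` is central. -/
theorem stmt_14 :
    let s := PresentedGroup.of (rels := B12Rels) (0 : Fin 3)
    let t := PresentedGroup.of (rels := B12Rels) (1 : Fin 3)
    let u := PresentedGroup.of (rels := B12Rels) (2 : Fin 3)
    let Δ := s * t * u * s
    (s * t * u) ^ 4 = Δ ^ 3 ∧
    Δ ^ 3 * s = s * Δ ^ 3 ∧ Δ ^ 3 * t = t * Δ ^ 3 ∧ Δ ^ 3 * u = u * Δ ^ 3 := by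
  intro s t u Δ
  have hrel : ∀ r ∈ B12Rels, PresentedGroup.mk B12Rels r = 1 := fun r hr =>
    (QuotientGroup.eq_one_iff r).mpr (Subgroup.subset_normalClosure hr)
  have h1 : s * t * u * s = t * u * s * t := by
    have := hrel _ (Set.mem_insert _ _)
    simp only [map_mul, map_inv] at this
    have := mul_eq_one_iff_eq_inv.mp this
    simpa [s, t, u, PresentedGroup.of] using this
  have h2 : t * u * s * t = u * s * t * u := by
    have := hrel _ (Set.mem_insert_of_mem _ rfl)
    simp only [map_mul, map_inv] at this
    have := mul_eq_one_iff_eq_inv.mp this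
    simpa [s, t, u, PresentedGroup.of] using this
  exact b12_aux s t u h1 h2
end
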